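/- Fix an integer K ≥ 2; for each user k ∈ {2,…,K} let G_k be an m×m complex Hermitian positive semidefinite matrix and r_k ≥ 0 a real rate. Suppose 𝒰 is a decodable user set for user 1 and 𝒰 ⊆ 𝒱 ⊆ {2,…,K}. Then for every nonempty subset 𝒲 ⊆ 𝒰: Σ_{i∈𝒲} r_i ≤ lndet( I + N_𝒱 + Σ_{i∈𝒲} G_i ) − lndet( I + N_𝒱 ), where N_𝒱 := Σ_{k∈{2,…,K}∖𝒱} G_k. That is, the decodability inequalities remain valid when the background noise is reduced to that of any superset 𝒱 of 𝒰; this is the property underlying the iterative shrinking algorithm for finding the optimal decodable user set. -/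

import Mathlib

open Matrix
open scoped ComplexOrder

/-- Definition 4.1: a subset 𝒰 ⊆ {2,…,K} is a decodable user set for user 1 if
for every nonempty 𝒥 ⊆ 𝒰 the sum rate of 𝒥 does not exceed the corresponding
MAC constraint, treating the users outside 𝒰 as colored Gaussian noise. -/
def IsDecodableUserSet {m : ℕ} (K : ℕ) (G : ℕ → Matrix (Fin m) (Fin m) ℂ)
    (r : ℕ → ℝ) (U : Finset ℕ) : Prop :=
  U ⊆ Finset.Icc 2 K ∧
  ∀ J ⊆ U, J.Nonempty →
    ∑ i ∈ J, r i ≤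
      Real.log ((1 + (∑ k ∈ Finset.Icc 2 K \ U, G k) + ∑ i ∈ J, G i).det.re) -
        Real.log ((1 + ∑ k ∈ Finset.Icc 2 K \ U, G k).det.re)

section Aux

variable {n : Type*} [Fintype n] [DecidableEq n]

open scoped MatrixOrder in
/-- Square root of a PSD matrix (replacement for the removed `PosSemidef.sqrt`). -/
noncomputable def Matrix.PosSemidef.sqrt {A : Matrix n n ℂ} (_ : A.PosSemidef) :
    Matrix n n ℂ := CFC.sqrt A

open scoped MatrixOrder in
lemma Matrix.PosSemidef.posSemidef_sqrt {A : Matrix n n ℂ} (hA : A.PosSemidef) :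
    hA.sqrt.PosSemidef := (CFC.sqrt_nonneg A).posSemidef

open scoped MatrixOrder in
lemma Matrix.PosSemidef.sqrt_mul_self {A : Matrix n n ℂ} (hA : A.PosSemidef) :
    hA.sqrt * hA.sqrt = A := CFC.sqrt_mul_sqrt_self A hA.nonneg

/-- det(1+W) ≥ 1 for PSD W. -/
lemma det_one_add_psd {W : Matrix n n ℂ} (hW : W.PosSemidef) :
    (1 : ℂ) ≤ (1 + W).det := by
  have hspec := hW.1.spectral_theorem
  set U : Matrix n n ℂ := (hW.1.eigenvectorUnitary : Matrix n n ℂ) with hUdef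
  have hU1 : U * star U = 1 := (Matrix.mem_unitaryGroup_iff).mp hW.1.eigenvectorUnitary.2
  set D : Matrix n n ℂ := Matrix.diagonal (RCLike.ofReal ∘ hW.1.eigenvalues) with hDdef
  have h1W : 1 + W = U * (1 + D) * star U := by
    rw [Matrix.mul_add, Matrix.add_mul, Matrix.mul_one, hU1, hspec]
    rfl
  have hdet : (1 + W).det = (1 + D).det := by
    rw [h1W, Matrix.det_mul, Matrix.det_mul, mul_right_comm, ← Matrix.det_mul, hU1,
      Matrix.det_one, one_mul]
  rw [hdet]
  have h1D : (1 : Matrix n n ℂ) + D = Matrix.diagonal (fun i => 1 + (hW.1.eigenvalues i : ℂ)) := by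
    rw [hDdef, ← Matrix.diagonal_one, Matrix.diagonal_add]
    rfl
  rw [h1D, Matrix.det_diagonal]
  have hcast : ∏ i, (1 + (hW.1.eigenvalues i : ℂ)) =
      ((∏ i, (1 + hW.1.eigenvalues i) : ℝ) : ℂ) := by
    push_cast; rfl
  rw [hcast, ← Complex.ofReal_one, Complex.real_le_real]
  exact Finset.prod_le_prod (fun i _ => zero_le_one) (fun i _ => by linarith [hW.eigenvalues_nonneg i]) |>.trans_eq' (by simp)

/-- det(M+Z) factorization for PD M with Z = C*C, C Hermitian. -/
lemma det_add_factor {M C : Matrix n n ℂ} (hM : M.PosDef) (hC : Cᴴ = C) :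
    (M + C * C).det = M.det * (1 + C * M⁻¹ * C).det := by
  have hMinv : M * M⁻¹ = 1 := Matrix.mul_nonsing_inv M hM.det_pos.ne'.isUnit
  have : M + C * C = M * (1 + M⁻¹ * (C * C)) := by
    rw [Matrix.mul_add, Matrix.mul_one, ← Matrix.mul_assoc, hMinv, Matrix.one_mul]
  rw [this, Matrix.det_mul]
  congr 1
  have : M⁻¹ * (C * C) = (M⁻¹ * C) * C := by rw [Matrix.mul_assoc]
  rw [this, Matrix.det_one_add_mul_comm, Matrix.mul_assoc, ← Matrix.mul_assoc]

/-- det is monotone under adding a PSD matrix to a PD matrix. -/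
lemma det_le_det_add_psd {M Z : Matrix n n ℂ} (hM : M.PosDef) (hZ : Z.PosSemidef) :
    M.det ≤ (M + Z).det := by
  have hC : (hZ.sqrt)ᴴ = hZ.sqrt := hZ.posSemidef_sqrt.1
  have hZC : Z = hZ.sqrt * hZ.sqrt := hZ.sqrt_mul_self.symm
  rw [hZC, det_add_factor hM hC]
  have hX : (hZ.sqrt * M⁻¹ * hZ.sqrt).PosSemidef := by
    have := hM.inv.posSemidef.mul_mul_conjTranspose_same hZ.sqrt
    rwa [hC] at this
  calc M.det = M.det * 1 := (mul_one _).symm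
    _ ≤ M.det * (1 + hZ.sqrt * M⁻¹ * hZ.sqrt).det :=
        mul_le_mul_of_nonneg_left (det_one_add_psd hX) hM.det_pos.le

/-- 1 - (1+S)⁻¹ is PSD when S is PSD. -/
lemma one_sub_inv_psd {S : Matrix n n ℂ} (hS : S.PosSemidef) :
    ((1 : Matrix n n ℂ) - (1 + S)⁻¹).PosSemidef := by
  have hP : (1 + S : Matrix n n ℂ).PosDef := Matrix.PosDef.one.add_posSemidef hS
  set Q := hP.posSemidef.sqrt with hQdef
  have hQQ : Q * Q = 1 + S := hP.posSemidef.sqrt_mul_self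
  have hQherm : Qᴴ = Q := hP.posSemidef.posSemidef_sqrt.1
  have hdetQ : IsUnit Q.det := by
    have : Q.det * Q.det = (1 + S).det := by rw [← Matrix.det_mul, hQQ]
    have hne : Q.det ≠ 0 := by
      intro h; rw [h, mul_zero] at this; exact hP.det_pos.ne' this.symm
    exact hne.isUnit
  have hQi : Q * Q⁻¹ = 1 := Matrix.mul_nonsing_inv Q hdetQ
  have hQi' : Q⁻¹ * Q = 1 := Matrix.nonsing_inv_mul Q hdetQ
  have hRherm : (Q⁻¹)ᴴ = Q⁻¹ := by rw [Matrix.conjTranspose_nonsing_inv, hQherm]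
  have hPinv : (1 + S)⁻¹ = Q⁻¹ * Q⁻¹ := by rw [← hQQ, Matrix.mul_inv_rev]
  have hkey : (1 : Matrix n n ℂ) - (1 + S)⁻¹ = Q⁻¹ * S * Q⁻¹ := by
    have h1 : Q⁻¹ * (1 + S) * Q⁻¹ = Q⁻¹ * Q⁻¹ + Q⁻¹ * S * Q⁻¹ := by
      rw [Matrix.mul_add, Matrix.mul_one, Matrix.add_mul]
    have h2 : Q⁻¹ * (1 + S) * Q⁻¹ = 1 := by
      rw [← hQQ]
      calc Q⁻¹ * (Q * Q) * Q⁻¹ = (Q⁻¹ * Q) * (Q * Q⁻¹) := by noncomm_ring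
        _ = 1 := by rw [hQi', hQi, one_mul]
    rw [hPinv, ← h2, h1]; abel
  rw [hkey]
  have := hS.conjTranspose_mul_mul_same Q⁻¹
  rwa [hRherm] at this

/-- Subadditivity: det(1+S+D) ≤ det(1+S)·det(1+D) for PSD S, D. -/
lemma det_one_add_add_le {S D : Matrix n n ℂ} (hS : S.PosSemidef) (hD : D.PosSemidef) :
    (1 + S + D).det ≤ (1 + S).det * (1 + D).det := by
  have hP : (1 + S : Matrix n n ℂ).PosDef := Matrix.PosDef.one.add_posSemidef hS
  have hC : (hD.sqrt)ᴴ = hD.sqrt := hD.posSemidef_sqrt.1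
  set C := hD.sqrt with hCdef
  have hDC : D = C * C := hD.sqrt_mul_self.symm
  have hfact : (1 + S + D).det = (1 + S).det * (1 + C * (1 + S)⁻¹ * C).det := by
    rw [hDC]; exact det_add_factor hP hC
  rw [hfact]
  have hX : (C * (1 + S)⁻¹ * C).PosSemidef := by
    have := hP.inv.posSemidef.mul_mul_conjTranspose_same C
    rwa [hC] at this
  have hZ : (C * (1 - (1 + S)⁻¹) * C).PosSemidef := by
    have := (one_sub_inv_psd hS).mul_mul_conjTranspose_same C
    rwa [hC] at this
  have h1X : (1 + C * (1 + S)⁻¹ * C : Matrix n n ℂ).PosDef :=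
    Matrix.PosDef.one.add_posSemidef hX
  have hsum : (1 + C * (1 + S)⁻¹ * C) + C * (1 - (1 + S)⁻¹) * C = 1 + D := by
    rw [hDC]
    have : C * (1 - (1 + S)⁻¹) * C = C * C - C * (1 + S)⁻¹ * C := by
      rw [Matrix.mul_sub, Matrix.mul_one, Matrix.sub_mul]
    rw [this]; abel
  have := det_le_det_add_psd h1X hZ
  rw [hsum] at this
  exact mul_le_mul_of_nonneg_left this hP.det_pos.le

/-- Key determinant inequality: det(A+D+S)·det(A) ≤ det(A+S)·det(A+D) for PD A, PSD S D. -/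
lemma det_mul_det_le {A S D : Matrix n n ℂ} (hA : A.PosDef)
    (hS : S.PosSemidef) (hD : D.PosSemidef) :
    (A + D + S).det * A.det ≤ (A + S).det * (A + D).det := by
  set Q := hA.posSemidef.sqrt with hQdef
  have hQQ : Q * Q = A := hA.posSemidef.sqrt_mul_self
  have hQherm : Qᴴ = Q := hA.posSemidef.posSemidef_sqrt.1
  have hdetQ : IsUnit Q.det := by
    have h : Q.det * Q.det = A.det := by rw [← Matrix.det_mul, hQQ]
    have hne : Q.det ≠ 0 := by
      intro h0; rw [h0, mul_zero] at h; exact hA.det_pos.ne' h.symm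
    exact hne.isUnit
  have hQi : Q * Q⁻¹ = 1 := Matrix.mul_nonsing_inv Q hdetQ
  have hQi' : Q⁻¹ * Q = 1 := Matrix.nonsing_inv_mul Q hdetQ
  have hRherm : (Q⁻¹)ᴴ = Q⁻¹ := by rw [Matrix.conjTranspose_nonsing_inv, hQherm]
  have detconj : ∀ X : Matrix n n ℂ, (A + X).det = A.det * (1 + Q⁻¹ * X * Q⁻¹).det := by
    intro X
    have hconj : Q * (1 + Q⁻¹ * X * Q⁻¹) * Q = A + X := by
      calc Q * (1 + Q⁻¹ * X * Q⁻¹) * Q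
          = Q * Q + (Q * Q⁻¹) * X * (Q⁻¹ * Q) := by noncomm_ring
        _ = A + X := by rw [hQQ, hQi, hQi', Matrix.one_mul, Matrix.mul_one]
    rw [← hconj, Matrix.det_mul, Matrix.det_mul, mul_right_comm, ← Matrix.det_mul, hQQ]
  have pS : (Q⁻¹ * S * Q⁻¹).PosSemidef := by
    have := hS.conjTranspose_mul_mul_same Q⁻¹; rwa [hRherm] at this
  have pD : (Q⁻¹ * D * Q⁻¹).PosSemidef := by
    have := hD.conjTranspose_mul_mul_same Q⁻¹; rwa [hRherm] at this
  have hDS : Q⁻¹ * (D + S) * Q⁻¹ = Q⁻¹ * S * Q⁻¹ + Q⁻¹ * D * Q⁻¹ := by noncomm_ring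
  have main : (1 + Q⁻¹ * S * Q⁻¹ + Q⁻¹ * D * Q⁻¹).det ≤
      (1 + Q⁻¹ * S * Q⁻¹).det * (1 + Q⁻¹ * D * Q⁻¹).det := det_one_add_add_le pS pD
  have e1 : (A + D + S).det = A.det * (1 + Q⁻¹ * S * Q⁻¹ + Q⁻¹ * D * Q⁻¹).det := by
    rw [add_assoc, detconj (D + S), hDS, add_assoc]
  have hAd : (0 : ℂ) ≤ A.det := hA.det_pos.le
  calc (A + D + S).det * A.det
      = (A.det * A.det) * (1 + Q⁻¹ * S * Q⁻¹ + Q⁻¹ * D * Q⁻¹).det := by rw [e1]; ring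
    _ ≤ (A.det * A.det) * ((1 + Q⁻¹ * S * Q⁻¹).det * (1 + Q⁻¹ * D * Q⁻¹).det) :=
        mul_le_mul_of_nonneg_left main (mul_nonneg hAd hAd)
    _ = (A + S).det * (A + D).det := by rw [detconj S, detconj D]; ring

theorem decodable_with_reduced_noise' {m : ℕ} (K : ℕ) (hK : 2 ≤ K)
    (G : ℕ → Matrix (Fin m) (Fin m) ℂ) (r : ℕ → ℝ)
    (hG : ∀ k ∈ Finset.Icc 2 K, (G k).PosSemidef) (hr : ∀ k, 0 ≤ r k)
    (U V : Finset ℕ)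
    (hUsub : U ⊆ Finset.Icc 2 K)
    (hIneq : ∀ J ⊆ U, J.Nonempty →
      ∑ i ∈ J, r i ≤
        Real.log ((1 + (∑ k ∈ Finset.Icc 2 K \ U, G k) + ∑ i ∈ J, G i).det.re) -
          Real.log ((1 + ∑ k ∈ Finset.Icc 2 K \ U, G k).det.re))
    (hUV : U ⊆ V) (hV : V ⊆ Finset.Icc 2 K) :
    ∀ W ⊆ U, W.Nonempty →
      ∑ i ∈ W, r i ≤
        Real.log ((1 + (∑ k ∈ Finset.Icc 2 K \ V, G k) + ∑ i ∈ W, G i).det.re) -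
          Real.log ((1 + ∑ k ∈ Finset.Icc 2 K \ V, G k).det.re) := by
  intro W hWU hWne
  have hpsd : ∀ s : Finset ℕ, s ⊆ Finset.Icc 2 K → (∑ k ∈ s, G k).PosSemidef := by
    intro s hs
    exact Finset.sum_induction G _ (fun a b ha hb => ha.add hb) Matrix.PosSemidef.zero
      (fun k hk => hG k (hs hk))
  set N := ∑ k ∈ Finset.Icc 2 K \ V, G k with hNdef
  set Dm := ∑ k ∈ V \ U, G k with hDdef
  set Sm := ∑ i ∈ W, G i with hSdef
  have hN : N.PosSemidef := hpsd _ Finset.sdiff_subset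
  have hDm : Dm.PosSemidef := hpsd _ (Finset.sdiff_subset.trans hV)
  have hSm : Sm.PosSemidef := hpsd _ (hWU.trans hUsub)
  have hsplit : Finset.Icc 2 K \ U = (Finset.Icc 2 K \ V) ∪ (V \ U) :=
    (Finset.sdiff_union_sdiff_cancel hV hUV).symm
  have hdisj : Disjoint (Finset.Icc 2 K \ V) (V \ U) :=
    Finset.sdiff_disjoint.mono_right Finset.sdiff_subset
  have hsumU : ∑ k ∈ Finset.Icc 2 K \ U, G k = N + Dm := by
    rw [hsplit, Finset.sum_union hdisj]
  have h1 := hIneq W hWU hWne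
  rw [hsumU, ← add_assoc] at h1
  -- positive-definiteness of the four matrices
  have hPDd : ((1 : Matrix (Fin m) (Fin m) ℂ) + N).PosDef := Matrix.PosDef.one.add_posSemidef hN
  have hPDb : ((1 : Matrix (Fin m) (Fin m) ℂ) + N + Dm).PosDef := hPDd.add_posSemidef hDm
  have hPDa : ((1 : Matrix (Fin m) (Fin m) ℂ) + N + Dm + Sm).PosDef := hPDb.add_posSemidef hSm
  have hPDc : ((1 : Matrix (Fin m) (Fin m) ℂ) + N + Sm).PosDef := hPDd.add_posSemidef hSm
  have key := det_mul_det_le hPDd hSm hDm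
  -- translate to real parts
  have ima := (Complex.lt_def.mp hPDa.det_pos).2.symm
  have imb := (Complex.lt_def.mp hPDb.det_pos).2.symm
  have imc := (Complex.lt_def.mp hPDc.det_pos).2.symm
  have imd := (Complex.lt_def.mp hPDd.det_pos).2.symm
  have rea := (Complex.lt_def.mp hPDa.det_pos).1
  have reb := (Complex.lt_def.mp hPDb.det_pos).1
  have rec' := (Complex.lt_def.mp hPDc.det_pos).1
  have red := (Complex.lt_def.mp hPDd.det_pos).1
  simp only [Complex.zero_re, Complex.zero_im] at ima imb imc imd rea reb rec' red
  have keyR : (1 + N + Dm + Sm).det.re * (1 + N).det.re ≤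
      (1 + N + Sm).det.re * (1 + N + Dm).det.re := by
    have := (Complex.le_def.mp key).1
    simpa [Complex.mul_re, ima, imb, imc, imd] using this
  have hlog : Real.log ((1 + N + Dm + Sm).det.re * (1 + N).det.re) ≤
      Real.log ((1 + N + Sm).det.re * (1 + N + Dm).det.re) :=
    Real.log_le_log (by positivity) keyR
  rw [Real.log_mul rea.ne' red.ne', Real.log_mul rec'.ne' reb.ne'] at hlog
  linarith


end Aux

/-- if 𝒰 is a decodable user set for user 1 and 𝒰 ⊆ 𝒱 ⊆ {2,…,K},
then the decodability inequalities for subsets of 𝒰 remain valid when the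
background noise is reduced to N_𝒱 = Σ_{k ∉ 𝒱} G_k. -/
theorem decodable_with_reduced_noise {m : ℕ} (K : ℕ) (hK : 2 ≤ K)
    (G : ℕ → Matrix (Fin m) (Fin m) ℂ) (r : ℕ → ℝ)
    (hG : ∀ k ∈ Finset.Icc 2 K, (G k).PosSemidef) (hr : ∀ k, 0 ≤ r k)
    (U V : Finset ℕ) (hU : IsDecodableUserSet K G r U)
    (hUV : U ⊆ V) (hV : V ⊆ Finset.Icc 2 K) :
    ∀ W ⊆ U, W.Nonempty →
      ∑ i ∈ W, r i ≤
        Real.log ((1 + (∑ k ∈ Finset.Icc 2 K \ V, G k) + ∑ i ∈ W, G i).det.re) -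
          Real.log ((1 + ∑ k ∈ Finset.Icc 2 K \ V, G k).det.re) := by
  obtain ⟨hUsub, hIneq⟩ := hU
  exact decodable_with_reduced_noise' K hK G r hG hr U V hUsub hIneq hUV hV
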